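/- Let b ≤ c be positive integers with 1 + b² + c² = 3bc. Then there exists n ≥ 0 such that b = d_n and c = d_{n+1}, where (d_n) is the sequence with d_0 = d_1 = 1 and d_{n+1} = 3·d_n − d_{n−1}. -/
import Mathlib

lemma stmt_8_aux (d : ℕ → ℤ) (h0 : d 0 = 1) (h1 : d 1 = 1)
    (hrec : ∀ n : ℕ, d (n + 2) = 3 * d (n + 1) - d n) :
    ∀ k : ℕ, ∀ b c : ℤ, c.toNat = k → 0 < b → 0 < c → b ≤ c →
      1 + b ^ 2 + c ^ 2 = 3 * b * c → ∃ n : ℕ, b = d n ∧ c = d (n + 1) := by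
  intro k
  induction k using Nat.strong_induction_on with
  | _ k ih =>
    intro b c hk hb hc hbc h
    rcases eq_or_lt_of_le hbc with heq | hlt
    · subst heq
      have hb2 : b ^ 2 = 1 := by nlinarith
      have hbge : 1 ≤ b := hb
      have hb1 : b = 1 := by nlinarith [sq_nonneg (b - 1)]
      exact ⟨0, by rw [h0, hb1], by rw [h1, hb1]⟩
    · set c' := 3 * b - c with hc'
      have hmul : c * c' = b ^ 2 + 1 := by rw [hc']; linear_combination -h
      have hc'pos : 0 < c' := by
        by_contra hle
        push_neg at hle
        have h2 : c * c' ≤ 0 := mul_nonpos_of_nonneg_of_nonpos hc.le hle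
        nlinarith [sq_nonneg b]
      have hc'le : c' ≤ b := by
        by_contra hgt
        push_neg at hgt
        have h3 : (b + 1) * (b + 1) ≤ c * c' :=
          mul_le_mul (by linarith) (by linarith) (by linarith) hc.le
        nlinarith
      have heq' : 1 + c' ^ 2 + b ^ 2 = 3 * c' * b := by rw [hc']; linear_combination h
      have hblt : b.toNat < k := by
        rw [← hk]; omega
      obtain ⟨n, hn1, hn2⟩ := ih b.toNat hblt c' b rfl hc'pos hb hc'le heq'
      refine ⟨n + 1, hn2, ?_⟩
      rw [hrec n, ← hn1, ← hn2]
      omega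

/-- Let `b ≤ c` be positive integers with `1 + b² + c² = 3bc`. Then there exists
`n ≥ 0` such that `b = d_n` and `c = d_{n+1}`, where `(d_n)` is the sequence with
`d₀ = d₁ = 1` and `d_{n+1} = 3·d_n − d_{n−1}`. -/
theorem stmt_8 (d : ℕ → ℤ) (h0 : d 0 = 1) (h1 : d 1 = 1)
    (hrec : ∀ n : ℕ, d (n + 2) = 3 * d (n + 1) - d n)
    (b c : ℤ) (hb : 0 < b) (hc : 0 < c) (hbc : b ≤ c)
    (h : 1 + b ^ 2 + c ^ 2 = 3 * b * c) :
    ∃ n : ℕ, b = d n ∧ c = d (n + 1) := by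
  exact stmt_8_aux d h0 h1 hrec c.toNat b c rfl hb hc hbc h
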